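/- Let X be a Banach space with Schauder basis (x_i). If (x_i) is not shrinking, then there exist α > 0 and a normalized block sequence (y_i) of (x_i) which is α-ℓ₁⁺: ‖∑ a_i y_i‖ ≥ α ∑ a_i for every finitely supported sequence (a_i) of non-negative scalars. -/
import Mathlib


open Filter Finset

/-- if a Schauder basis is not shrinking then there is a normalized block
sequence which is `α`-`ℓ₁⁺` for some `α > 0`. -/
theorem stmt_5 (X : Type*) [NormedAddCommGroup X] [NormedSpace ℝ X] [CompleteSpace X]
    (x : ℕ → X) (xstar : ℕ → X →L[ℝ] ℝ)
    (hbi : ∀ i j, xstar i (x j) = if i = j then 1 else 0)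
    (hbasis : ∀ v : X,
      Tendsto (fun n => ∑ i ∈ Finset.range n, xstar i v • x i) atTop (nhds v))
    (hnotshrinking : ¬ ∀ g : X →L[ℝ] ℝ,
      Tendsto (fun n => ∑ i ∈ Finset.range n, g (x i) • xstar i) atTop (nhds g)) :
    ∃ (α : ℝ) (y : ℕ → X) (a : ℕ → ℝ) (m k : ℕ → ℕ), 0 < α ∧
      (∀ j, m j ≤ k j) ∧ (∀ j, k j < m (j + 1)) ∧
      (∀ j, y j = ∑ i ∈ Finset.Icc (m j) (k j), a i • x i) ∧
      (∀ j, ‖y j‖ = 1) ∧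
      (∀ (s : Finset ℕ) (c : ℕ → ℝ), (∀ i, 0 ≤ c i) →
        α * ∑ i ∈ s, c i ≤ ‖∑ i ∈ s, c i • y i‖) := by
  push_neg at hnotshrinking
  obtain ⟨g, hg⟩ := hnotshrinking
  -- the partial sum projections, and a uniform bound on their norms (Banach–Steinhaus)
  set P : ℕ → X →L[ℝ] X := fun N => ∑ i ∈ Finset.range N, (xstar i).smulRight (x i) with hPdef
  have hPapply : ∀ N v, P N v = ∑ i ∈ Finset.range N, xstar i v • x i := by
    intro N v
    simp [hPdef, ContinuousLinearMap.sum_apply]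
  have hbound : ∃ C : ℝ, 0 < C ∧ ∀ N, ‖P N‖ ≤ C := by
    obtain ⟨C, hC⟩ := banach_steinhaus (g := P) (fun v => by
      obtain ⟨B, hB⟩ := (((hbasis v).congr (fun N => (hPapply N v).symm)).norm).bddAbove_range
      exact ⟨B, fun N => hB ⟨N, rfl⟩⟩)
    exact ⟨max C 1, lt_of_lt_of_le one_pos (le_max_right _ _),
      fun N => (hC N).trans (le_max_left _ _)⟩
  obtain ⟨C, hCpos, hC⟩ := hbound
  have hgP : ∀ n (v : X), g (P n v) = (∑ i ∈ Finset.range n, (g (x i) • xstar i)) v := by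
    intro n v
    rw [hPapply, map_sum, ContinuousLinearMap.sum_apply]
    exact Finset.sum_congr rfl fun i _ => by
      simp [mul_comm]
  rw [Metric.tendsto_atTop] at hg
  push_neg at hg
  obtain ⟨ε, hεpos, hg⟩ := hg
  set α₀ : ℝ := ε / (8 * C) with hα₀def
  have hα₀ : 0 < α₀ := by positivity
  -- the one-step construction: past any index, there is a normalized block with g-value ≥ α₀
  have step : ∀ n₀ : ℕ, ∃ p : ℕ × ℕ × (ℕ → ℝ), n₀ ≤ p.1 ∧ p.1 ≤ p.2.1 ∧
      ‖∑ i ∈ Finset.Icc p.1 p.2.1, p.2.2 i • x i‖ = 1 ∧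
      α₀ ≤ g (∑ i ∈ Finset.Icc p.1 p.2.1, p.2.2 i • x i) := by
    intro n₀
    obtain ⟨n, hn, hdist⟩ := hg n₀
    set S : X →L[ℝ] ℝ := ∑ i ∈ Finset.range n, g (x i) • xstar i with hSdef
    have hnorm : ε ≤ ‖S - g‖ := by rwa [dist_eq_norm] at hdist
    have h2 : ¬ ‖S - g‖ ≤ ε / 2 := by push_neg; linarith
    rw [ContinuousLinearMap.opNorm_le_iff (by positivity)] at h2
    push_neg at h2
    obtain ⟨v, hv⟩ := h2
    have hvne : v ≠ 0 := by
      rintro rfl; simp at hv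
    have hvnorm : 0 < ‖v‖ := norm_pos_iff.2 hvne
    -- normalized, sign-corrected vector w with g w - S w > ε/2 and ‖w‖ = 1
    have key : ∃ w : X, ‖w‖ = 1 ∧ ε / 2 < g w - S w := by
      rcases le_or_gt ((S - g) v) 0 with h | h
      · refine ⟨‖v‖⁻¹ • v, by simp [norm_smul, hvnorm.ne', abs_of_nonneg hvnorm.le], ?_⟩
        have habs : ‖(S - g) v‖ = -(S v - g v) := by
          rw [Real.norm_eq_abs, abs_of_nonpos]
          · simp
          · simpa using h
        have : ε / 2 * ‖v‖ < -(S v - g v) := by rw [← habs]; exact hv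
        have hlt : ε / 2 < ‖v‖⁻¹ * (g v - S v) := by
          rw [lt_inv_mul_iff₀ hvnorm, mul_comm]
          linarith
        simpa [map_smul, smul_eq_mul, mul_sub] using hlt
      · refine ⟨-(‖v‖⁻¹ • v), by simp [norm_smul, abs_of_nonneg hvnorm.le, hvnorm.ne'], ?_⟩
        have habs : ‖(S - g) v‖ = S v - g v := by
          rw [Real.norm_eq_abs, abs_of_pos]
          · simp
          · simpa using h
        have : ε / 2 * ‖v‖ < S v - g v := by rw [← habs]; exact hv
        have hlt : ε / 2 < ‖v‖⁻¹ * (S v - g v) := by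
          rw [lt_inv_mul_iff₀ hvnorm, mul_comm]
          linarith
        have heq : g (-(‖v‖⁻¹ • v)) - S (-(‖v‖⁻¹ • v)) = ‖v‖⁻¹ * (S v - g v) := by
          simp [map_smul, smul_eq_mul]; ring
        rw [heq]; exact hlt
    obtain ⟨w, hw1, hw2⟩ := key
    -- find N > n with g (P N w) - g (P n w) > ε / 4
    have htend : Tendsto (fun N => g (P N w) - g (P n w)) atTop (nhds (g w - g (P n w))) := by
      refine Tendsto.sub_const ?_ _
      exact (g.continuous.tendsto w).comp ((hbasis w).congr fun N => (hPapply N w).symm)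
    have hlim : ε / 4 < g w - g (P n w) := by
      have : g (P n w) = S w := hgP n w
      rw [this]; linarith
    have hev := (htend.eventually (lt_mem_nhds hlim)).and (eventually_ge_atTop (n + 1))
    obtain ⟨N, hN1, hN2⟩ := hev.exists
    set u : X := P N w - P n w with hudef
    have hgu : ε / 4 < g u := by simpa [hudef, map_sub] using hN1
    have hune : u ≠ 0 := fun h => by simp [h] at hgu; linarith
    have hunorm : 0 < ‖u‖ := norm_pos_iff.2 hune
    have huC : ‖u‖ ≤ 2 * C := by
      calc ‖u‖ ≤ ‖P N w‖ + ‖P n w‖ := norm_sub_le _ _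
      _ ≤ C * ‖w‖ + C * ‖w‖ := add_le_add
          ((P N).le_opNorm w |>.trans (by gcongr; exact hC N))
          ((P n).le_opNorm w |>.trans (by gcongr; exact hC n))
      _ = 2 * C := by rw [hw1]; ring
    -- u as a block sum
    have husum : u = ∑ i ∈ Finset.Icc n (N - 1), xstar i w • x i := by
      have hnN : n ≤ N := by omega
      have : Finset.Icc n (N - 1) = Finset.Ico n N := by
        rw [← Finset.Ico_add_one_right_eq_Icc]; congr 1; omega
      rw [this, Finset.sum_Ico_eq_sub _ hnN, hudef, hPapply, hPapply]
    refine ⟨⟨n, N - 1, fun i => ‖u‖⁻¹ * xstar i w⟩, hn, by show n ≤ N - 1; omega, ?_, ?_⟩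
    · have : ∑ i ∈ Finset.Icc n (N - 1), (‖u‖⁻¹ * xstar i w) • x i = ‖u‖⁻¹ • u := by
        rw [husum, Finset.smul_sum]
        exact Finset.sum_congr rfl fun i _ => by rw [smul_smul]
      rw [this, norm_smul, Real.norm_eq_abs, abs_of_nonneg (by positivity),
        inv_mul_cancel₀ hunorm.ne']
    · have : ∑ i ∈ Finset.Icc n (N - 1), (‖u‖⁻¹ * xstar i w) • x i = ‖u‖⁻¹ • u := by
        rw [husum, Finset.smul_sum]
        exact Finset.sum_congr rfl fun i _ => by rw [smul_smul]
      rw [this, map_smul, smul_eq_mul]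
      have h1 : (2 * C)⁻¹ ≤ ‖u‖⁻¹ := by
        apply inv_anti₀ hunorm huC
      calc ε / (8 * C) = (2 * C)⁻¹ * (ε / 4) := by
            rw [inv_mul_eq_div, div_div]; congr 1; ring
      _ ≤ ‖u‖⁻¹ * g u := by
          apply mul_le_mul h1 hgu.le (by linarith) (by positivity)
  -- recursively construct the block sequence
  choose F h1 h2 h3 h4 using step
  set d : ℕ → ℕ × ℕ × (ℕ → ℝ) :=
    fun j => Nat.rec (F 0) (fun _ p => F (p.2.1 + 1)) j with hddef
  set m : ℕ → ℕ := fun j => (d j).1 with hmdef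
  set k : ℕ → ℕ := fun j => (d j).2.1 with hkdef
  set y : ℕ → X := fun j => ∑ i ∈ Finset.Icc (m j) (k j), (d j).2.2 i • x i with hydef
  have hdF : ∀ j, ∃ n, d j = F n := by
    intro j
    cases j with
    | zero => exact ⟨0, rfl⟩
    | succ j' => exact ⟨(d j').2.1 + 1, rfl⟩
  have hmk : ∀ j, m j ≤ k j := by
    intro j; obtain ⟨n, hn⟩ := hdF j
    simp only [hmdef, hkdef, hn]; exact h2 n
  have hkm : ∀ j, k j < m (j + 1) := by
    intro j
    have := h1 (k j + 1)
    simp only [hmdef]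
    rw [show d (j+1) = F (k j + 1) from rfl]
    omega
  have hy1 : ∀ j, ‖y j‖ = 1 := by
    intro j; obtain ⟨n, hn⟩ := hdF j
    simp only [hydef, hmdef, hkdef, hn]; exact h3 n
  have hy2 : ∀ j, α₀ ≤ g (y j) := by
    intro j; obtain ⟨n, hn⟩ := hdF j
    simp only [hydef, hmdef, hkdef, hn]; exact h4 n
  have hmono : StrictMono m := strictMono_nat_of_lt_succ fun j => lt_of_le_of_lt (hmk j) (hkm j)
  have hjm : ∀ j, j ≤ m j := by
    intro j
    induction j with
    | zero => exact Nat.zero_le _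
    | succ j' ih => have := hkm j'; have := hmk j'; omega
  -- coefficient evaluation
  have happ : ∀ j i, xstar i (y j) =
      if i ∈ Finset.Icc (m j) (k j) then (d j).2.2 i else 0 := by
    intro j i
    rw [hydef]
    simp only [map_sum, map_smul, smul_eq_mul, hbi]
    simp only [mul_ite, mul_one, mul_zero]
    rw [Finset.sum_ite_eq]
  -- disjointness of supports
  have hdisj : ∀ j j' i, j ≠ j' → i ∈ Finset.Icc (m j) (k j) → i ∉ Finset.Icc (m j') (k j') := by
    intro j j' i hne hi hi'
    simp only [Finset.mem_Icc] at hi hi'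
    rcases lt_or_gt_of_ne hne with h | h
    · have h1' : k j < m (j + 1) := hkm j
      have h2' : m (j + 1) ≤ m j' := hmono.monotone h
      omega
    · have h1' : k j' < m (j' + 1) := hkm j'
      have h2' : m (j' + 1) ≤ m j := hmono.monotone h
      omega
  set a : ℕ → ℝ := fun i => ∑ j ∈ Finset.range (i + 1), xstar i (y j) with hadef
  have hay : ∀ j i, i ∈ Finset.Icc (m j) (k j) → a i = (d j).2.2 i := by
    intro j i hi
    show ∑ j' ∈ Finset.range (i + 1), xstar i (y j') = (d j).2.2 i
    have hji : j ∈ Finset.range (i + 1) := by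
      simp only [Finset.mem_range]
      have := hjm j
      simp only [Finset.mem_Icc] at hi
      omega
    rw [Finset.sum_eq_single j]
    · rw [happ, if_pos hi]
    · intro j' _ hne
      rw [happ, if_neg (hdisj j j' i (Ne.symm hne) hi)]
    · intro h; exact absurd hji h
  have hyrep : ∀ j, y j = ∑ i ∈ Finset.Icc (m j) (k j), a i • x i := by
    intro j
    rw [hydef]
    exact Finset.sum_congr rfl fun i hi => by rw [hay j i hi]
  -- positivity of ‖g‖
  have hup' : ∀ w : X, g w ≤ ‖g‖ * ‖w‖ := fun w =>
    calc g w ≤ |g w| := le_abs_self _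
    _ = ‖g w‖ := (Real.norm_eq_abs _).symm
    _ ≤ ‖g‖ * ‖w‖ := g.le_opNorm _
  have hgnorm : 0 < ‖g‖ := by
    have := hy2 0
    have h0 : g (y 0) ≤ ‖g‖ := by
      have := hup' (y 0)
      rw [hy1 0, mul_one] at this
      exact this
    linarith
  refine ⟨α₀ / ‖g‖, y, a, m, k, div_pos hα₀ hgnorm, hmk, hkm, hyrep, hy1, ?_⟩
  intro s c hc
  have hgs : g (∑ i ∈ s, c i • y i) = ∑ i ∈ s, c i * g (y i) := by
    rw [map_sum]; exact Finset.sum_congr rfl fun i _ => by rw [map_smul, smul_eq_mul]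
  have hlow : α₀ * ∑ i ∈ s, c i ≤ g (∑ i ∈ s, c i • y i) := by
    rw [hgs, Finset.mul_sum]
    exact Finset.sum_le_sum fun i _ => by
      rw [mul_comm]
      exact mul_le_mul_of_nonneg_left (hy2 i) (hc i) |>.trans_eq' (by ring)
  have hup : g (∑ i ∈ s, c i • y i) ≤ ‖g‖ * ‖∑ i ∈ s, c i • y i‖ := hup' _
  rw [div_mul_eq_mul_div, div_le_iff₀ hgnorm, mul_comm ‖∑ i ∈ s, c i • y i‖ ‖g‖]
  linarith
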